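/- Let ξ ∈ ℝ with |ξ| > 1, let s be a nonzero real number, let γ ∈ ℝ, and set λ = ξ − sgn(ξ)·√(ξ² − 1). Then det[ (N(ξ) + 2γs·M)·(1, λ)ᵀ | (1, 1/λ)ᵀ ] = 0 if and only if γ = −sgn(ξ)·√(ξ² − 1)/s. -/

import Mathlib

/-- The transfer matrix `N(ξ)` with rows `(2ξ, −1)` and `(1, 0)`. -/
def Nmat (ξ : ℝ) : Matrix (Fin 2) (Fin 2) ℝ := !![2 * ξ, -1; 1, 0]

/-- The matrix `M` with rows `(1, 0)` and `(0, 0)`. -/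
def Mmat : Matrix (Fin 2) (Fin 2) ℝ := !![1, 0; 0, 0]

/-- `λ(ξ) = ξ − sgn(ξ)·√(ξ² − 1)`. -/
noncomputable def lamSmall (ξ : ℝ) : ℝ := ξ - Real.sign ξ * Real.sqrt (ξ ^ 2 - 1)

/-- `det[v | w]`: the determinant of the 2×2 matrix with columns `v` and `w`. -/
def detCols (v w : Fin 2 → ℝ) : ℝ := Matrix.det !![v 0, w 0; v 1, w 1]

/-- the single-impurity eigenvalue condition:
`det[(N(ξ) + 2γs·M)(1,λ)ᵀ | (1,1/λ)ᵀ] = 0` iff `γ = −sgn(ξ)·√(ξ²−1)/s`. -/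
theorem single_impurity_condition (ξ : ℝ) (hξ : 1 < |ξ|) (s : ℝ) (hs : s ≠ 0) (γ : ℝ) :
    detCols ((Nmat ξ + (2 * γ * s) • Mmat).mulVec ![1, lamSmall ξ]) ![1, 1 / lamSmall ξ] = 0 ↔
      γ = -Real.sign ξ * Real.sqrt (ξ ^ 2 - 1) / s := by
  set r := Real.sqrt (ξ ^ 2 - 1) with hr
  set σ := Real.sign ξ with hσ
  have hξ0 : ξ ≠ 0 := by
    intro h; rw [h] at hξ; simp at hξ; linarith
  have hσ2 : σ * σ = 1 := by
    rcases Real.sign_apply_eq_of_ne_zero ξ hξ0 with h | h <;> rw [hσ, h] <;> norm_num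
  have hr2 : r * r = ξ ^ 2 - 1 := by
    rw [hr]
    exact Real.mul_self_sqrt (by nlinarith [abs_nonneg ξ, sq_abs ξ])
  have hσξ : σ * ξ = |ξ| := by
    rcases le_or_gt 0 ξ with h | h
    · rw [hσ, Real.sign_of_pos (lt_of_le_of_ne h (Ne.symm hξ0)), abs_of_nonneg h]; ring
    · rw [hσ, Real.sign_of_neg h, abs_of_neg h]; ring
  have hlam : lamSmall ξ * (ξ + σ * r) = 1 := by
    unfold lamSmall
    rw [← hr, ← hσ]
    nlinarith [hr2, hσ2]
  have hl0 : lamSmall ξ ≠ 0 := by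
    intro h; rw [h] at hlam; simp at hlam
  have hdet : detCols ((Nmat ξ + (2 * γ * s) • Mmat).mulVec ![1, lamSmall ξ]) ![1, 1 / lamSmall ξ]
      = (2 * ξ + 2 * γ * s - lamSmall ξ) * (1 / lamSmall ξ) - 1 := by
    simp [detCols, Nmat, Mmat, Matrix.mulVec, dotProduct, Fin.sum_univ_two,
      Matrix.det_fin_two_of]
    ring_nf
    tauto
  rw [hdet]
  rw [eq_div_iff hs]
  constructor
  · intro h
    have h2 : 2 * ξ + 2 * γ * s - lamSmall ξ = lamSmall ξ := by
      field_simp at h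
      linarith
    unfold lamSmall at h2
    rw [← hr, ← hσ] at h2
    nlinarith [h2]
  · intro h
    have h2 : 2 * ξ + 2 * γ * s - lamSmall ξ = lamSmall ξ := by
      unfold lamSmall; rw [← hr, ← hσ]; nlinarith [h]
    rw [h2]
    field_simp
    norm_num
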